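/- Let a, b be distinct points of ℝ³, L = ‖b − a‖, τ = (b − a)/L, and let G(x) = ln( (‖x − b‖ + L + τ·(a − x)) / (‖x − a‖ + τ·(a − x)) ). Then for every x ∈ ℝ³ not on the straight line through a and b, G is differentiable at x with gradient ∇G(x) = ( (x − b)/‖x − b‖ − τ ) / ( L + ‖x − b‖ + τ·(a − x) ) − ( (x − a)/‖x − a‖ − τ ) / ( ‖x − a‖ + τ·(a − x) ). -/

import Mathlib

open scoped RealInnerProductSpace
open InnerProductSpace

private lemma hasFDerivAt_norm_sub {E : Type*} [NormedAddCommGroup E]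
    [InnerProductSpace ℝ E] [CompleteSpace E] (c x : E) (h : x ≠ c) :
    HasFDerivAt (fun y => ‖y - c‖) (toDual ℝ E (‖x - c‖⁻¹ • (x - c))) x := by
  have h0 : x - c ≠ 0 := sub_ne_zero.mpr h
  have hn : ‖x - c‖ ≠ 0 := norm_ne_zero_iff.mpr h0
  have hsq : HasFDerivAt (fun y => ‖y - c‖ ^ 2)
      (2 • (innerSL ℝ (x - c)).comp (ContinuousLinearMap.id ℝ E)) x := by
    simpa using ((hasFDerivAt_id x).sub_const c).norm_sq
  have hs : HasDerivAt Real.sqrt (1 / (2 * Real.sqrt (‖x - c‖ ^ 2))) (‖x - c‖ ^ 2) :=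
    Real.hasDerivAt_sqrt (by positivity)
  have hcomp := hs.comp_hasFDerivAt x hsq
  have heq : (Real.sqrt ∘ fun y => ‖y - c‖ ^ 2) = fun y => ‖y - c‖ := by
    funext y; simp [Function.comp, Real.sqrt_sq (norm_nonneg _)]
  rw [heq] at hcomp
  refine hcomp.congr_fderiv ?_
  symm
  ext v
  simp only [toDual_apply_apply, ContinuousLinearMap.smul_apply, ContinuousLinearMap.coe_smul',
    Pi.smul_apply, ContinuousLinearMap.coe_comp', Function.comp_apply,
    ContinuousLinearMap.coe_id', id_eq, innerSL_apply_apply, real_inner_smul_left, smul_eq_mul,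
    Real.sqrt_sq (norm_nonneg (x - c))]
  field_simp
  ring

theorem segment_potential_gradient
    (a b : EuclideanSpace ℝ (Fin 3)) (hab : a ≠ b)
    (L : ℝ) (hL : L = ‖b - a‖)
    (τ : EuclideanSpace ℝ (Fin 3)) (hτ : τ = L⁻¹ • (b - a))
    (G : EuclideanSpace ℝ (Fin 3) → ℝ)
    (hG : ∀ y, G y = Real.log ((‖y - b‖ + L + ⟪τ, a - y⟫) / (‖y - a‖ + ⟪τ, a - y⟫)))
    (x : EuclideanSpace ℝ (Fin 3))
    (hx : ∀ t : ℝ, x ≠ a + t • (b - a)) :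
    HasGradientAt G
      ((L + ‖x - b‖ + ⟪τ, a - x⟫)⁻¹ • (‖x - b‖⁻¹ • (x - b) - τ) -
        (‖x - a‖ + ⟪τ, a - x⟫)⁻¹ • (‖x - a‖⁻¹ • (x - a) - τ)) x := by
  have hba : b - a ≠ 0 := sub_ne_zero.mpr (Ne.symm hab)
  have hL0 : 0 < L := hL ▸ norm_pos_iff.mpr hba
  have hτ1 : ‖τ‖ = 1 := by
    rw [hτ, norm_smul, norm_inv, Real.norm_eq_abs, abs_of_pos hL0, ← hL]
    field_simp
  -- key positivity helper
  have key : ∀ c : EuclideanSpace ℝ (Fin 3), (∀ t : ℝ, x - c ≠ t • (b - a)) →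
      0 < ‖x - c‖ - ⟪τ, x - c⟫ := by
    intro c hc
    have h0 : x - c ≠ 0 := by simpa using hc 0
    have hle : ⟪τ, x - c⟫ ≤ ‖τ‖ * ‖x - c‖ := real_inner_le_norm _ _
    rcases lt_or_eq_of_le hle with h | h
    · rw [hτ1, one_mul] at h; linarith
    · exfalso
      rw [inner_eq_norm_mul_iff_real, hτ1, one_smul] at h
      rw [hτ, smul_smul] at h
      exact hc (‖x - c‖ * L⁻¹) h.symm
  have hxa : x ≠ a := by simpa using hx 0
  have hxb : x ≠ b := by
    have := hx 1
    simpa [sub_ne_zero] using this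
  have ha' : ∀ t : ℝ, x - a ≠ t • (b - a) := by
    intro t h
    exact hx t (by rw [← h]; abel)
  have hb' : ∀ t : ℝ, x - b ≠ t • (b - a) := by
    intro t h
    apply hx (t + 1)
    have : x = b + t • (b - a) := by rw [← h]; abel
    rw [this, add_smul, one_smul]; abel
  have hτba : ⟪τ, b - a⟫ = L := by
    rw [hτ, real_inner_smul_left, real_inner_self_eq_norm_mul_norm, ← hL]
    field_simp
  have hNx : ‖x - b‖ + L + ⟪τ, a - x⟫ = ‖x - b‖ - ⟪τ, x - b⟫ := by
    have : (⟪τ, a - x⟫ : ℝ) + ⟪τ, b - a⟫ = ⟪τ, b - x⟫ := by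
      rw [← inner_add_right]; congr 1; abel
    have h2 : (⟪τ, b - x⟫ : ℝ) = -⟪τ, x - b⟫ := by
      rw [← inner_neg_right]; congr 1; abel
    rw [← hτba] at *
    linarith [this, h2]
  have hDx : ‖x - a‖ + ⟪τ, a - x⟫ = ‖x - a‖ - ⟪τ, x - a⟫ := by
    have h2 : (⟪τ, a - x⟫ : ℝ) = -⟪τ, x - a⟫ := by
      rw [← inner_neg_right]; congr 1; abel
    linarith
  have Npos : 0 < ‖x - b‖ + L + ⟪τ, a - x⟫ := by
    rw [hNx]; exact key b (hb')
  have Dpos : 0 < ‖x - a‖ + ⟪τ, a - x⟫ := by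
    rw [hDx]; exact key a (ha')
  -- derivatives
  have hI : HasFDerivAt (fun y : EuclideanSpace ℝ (Fin 3) => (⟪τ, a - y⟫ : ℝ)) (-(toDual ℝ (EuclideanSpace ℝ (Fin 3)) τ)) x := by
    have heq : (fun y : EuclideanSpace ℝ (Fin 3) => (⟪τ, a - y⟫ : ℝ)) = fun y => ⟪τ, a⟫ - (toDual ℝ (EuclideanSpace ℝ (Fin 3)) τ) y := by
      funext y; simp [inner_sub_right, toDual_apply_apply]
    rw [heq]
    exact ((hasFDerivAt_const (⟪τ, a⟫ : ℝ) x).sub ((toDual ℝ (EuclideanSpace ℝ (Fin 3)) τ).hasFDerivAt)).congr_fderiv (by simp)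
  have hNB := hasFDerivAt_norm_sub b x hxb
  have hNA := hasFDerivAt_norm_sub a x hxa
  have hN : HasFDerivAt (fun y : EuclideanSpace ℝ (Fin 3) => ‖y - b‖ + L + ⟪τ, a - y⟫)
      (toDual ℝ (EuclideanSpace ℝ (Fin 3)) (‖x - b‖⁻¹ • (x - b)) + -(toDual ℝ (EuclideanSpace ℝ (Fin 3)) τ)) x := by
    exact (hNB.add_const L).add hI
  have hD : HasFDerivAt (fun y : EuclideanSpace ℝ (Fin 3) => ‖y - a‖ + ⟪τ, a - y⟫)
      (toDual ℝ (EuclideanSpace ℝ (Fin 3)) (‖x - a‖⁻¹ • (x - a)) + -(toDual ℝ (EuclideanSpace ℝ (Fin 3)) τ)) x := hNA.add hI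
  have hlogN := hN.log Npos.ne'
  have hlogD := hD.log Dpos.ne'
  have final := hlogN.sub hlogD
  -- eventual equality
  have hNev : ∀ᶠ y in nhds x, 0 < ‖y - b‖ + L + ⟪τ, a - y⟫ :=
    hN.continuousAt.eventually (eventually_gt_nhds Npos)
  have hDev : ∀ᶠ y in nhds x, 0 < ‖y - a‖ + ⟪τ, a - y⟫ :=
    hD.continuousAt.eventually (eventually_gt_nhds Dpos)
  have hGeq : G =ᶠ[nhds x] fun y =>
      Real.log (‖y - b‖ + L + ⟪τ, a - y⟫) - Real.log (‖y - a‖ + ⟪τ, a - y⟫) := by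
    filter_upwards [hNev, hDev] with y hNy hDy
    rw [hG y, Real.log_div hNy.ne' hDy.ne']
  rw [hasGradientAt_iff_hasFDerivAt]
  refine HasFDerivAt.congr_of_eventuallyEq ?_ hGeq
  refine final.congr_fderiv ?_
  symm
  rw [map_sub, map_smul, map_smul, map_sub, map_sub]
  have hc : L + ‖x - b‖ + ⟪τ, a - x⟫ = ‖x - b‖ + L + ⟪τ, a - x⟫ := by ring
  rw [hc]
  simp [sub_eq_add_neg]
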